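/- Let k > 0 be a real number, set s = √k/(1+√k) and c = 1/(k·(1 + 1/(1+√k))). Define π_0 = c·k, π_1 = 0, and π_i = c·s^i for every integer i ≥ 2. Then ∑_{i≥0} π_i = 1 and ∑_{i≥0} i·π_i = 1; that is, (π_i)_{i≥0} is a probability distribution on ℕ with mean 1. -/

import Mathlib

/-- Let `k > 0`, `s = √k/(1+√k)`,
`c = 1/(k·(1 + 1/(1+√k)))`, and let `π₀ = c·k`, `π₁ = 0`, `π_i = c·s^i` for
`i ≥ 2`.  Then `(π_i)` is a probability distribution on ℕ with mean 1. -/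
theorem associative_tree_offspring_critical (k : ℝ) (hk : 0 < k) :
    HasSum
      (fun i : ℕ =>
        if i = 0 then (1 / (k * (1 + 1 / (1 + Real.sqrt k)))) * k
        else if i = 1 then 0
        else (1 / (k * (1 + 1 / (1 + Real.sqrt k))))
            * (Real.sqrt k / (1 + Real.sqrt k)) ^ i)
      1
    ∧ HasSum
      (fun i : ℕ =>
        (i : ℝ) *
          (if i = 0 then (1 / (k * (1 + 1 / (1 + Real.sqrt k)))) * k
          else if i = 1 then 0
          else (1 / (k * (1 + 1 / (1 + Real.sqrt k))))
              * (Real.sqrt k / (1 + Real.sqrt k)) ^ i))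
      1 := by
  have hr0 : 0 < Real.sqrt k := Real.sqrt_pos.2 hk
  set r := Real.sqrt k with hrdef
  have hk' : r ^ 2 = k := Real.sq_sqrt hk.le
  have h1r : 0 < 1 + r := by linarith
  set s := r / (1 + r) with hs
  have hs0 : 0 ≤ s := div_nonneg hr0.le h1r.le
  have hs1 : s < 1 := (div_lt_one h1r).2 (by linarith)
  have hsn : ‖s‖ < 1 := by rw [Real.norm_eq_abs, abs_of_nonneg hs0]; exact hs1
  have h1s : 1 - s = 1 / (1 + r) := by
    rw [hs, eq_div_iff h1r.ne', sub_mul, div_mul_cancel₀ _ h1r.ne']; ring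
  set c := 1 / (k * (1 + 1 / (1 + r))) with hc
  have hcval : c = (1 + r) / (k * (2 + r)) := by
    rw [hc, ← hk']; field_simp
    ring
  constructor
  · have hgeo : HasSum (fun i : ℕ => c * s ^ i) (c * (1 - s)⁻¹) :=
      (hasSum_geometric_of_norm_lt_one hsn).mul_left c
    have h1 := (hgeo.update 0 (c * k)).update 1 0
    have hfe : Function.update (Function.update (fun i : ℕ => c * s ^ i) 0 (c * k)) 1 0
        = fun i : ℕ => if i = 0 then c * k else if i = 1 then 0
            else c * s ^ i := by
      funext i
      rcases i with _ | _ | i <;> simp [Function.update]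
    rw [hfe] at h1
    convert h1 using 1
    · rfl
    rw [hcval, h1s, ← hk']
    simp only [hs, pow_one, pow_zero, Function.update_of_ne (by norm_num : (1:ℕ) ≠ 0)]
    field_simp
    ring
  · have hgeo2 : HasSum (fun i : ℕ => (i : ℝ) * (c * s ^ i)) (c * (s / (1 - s) ^ 2)) := by
      have h := (hasSum_coe_mul_geometric_of_norm_lt_one hsn).mul_left c
      convert h using 2 with i
      · rfl
      ring
    have h1 := hgeo2.update 1 0
    have hfe : Function.update (fun i : ℕ => (i : ℝ) * (c * s ^ i)) 1 0
        = fun i : ℕ => (i : ℝ) * (if i = 0 then c * k else if i = 1 then 0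
            else c * s ^ i) := by
      funext i
      rcases i with _ | _ | i <;> simp [Function.update]
    rw [hfe] at h1
    convert h1 using 1
    · rfl
    rw [hcval, h1s, ← hk']
    simp only [hs, Nat.cast_one, one_mul]
    field_simp
    ring
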